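/- Worst-case CVaR ultimate bound with bounded input (Theorem 3): consider x_{t+1} = A x_t + D v_t + E w_t with spectral norm ‖A‖ < 1, Σ_w positive semidefinite, and inputs satisfying ‖v_t‖ ≤ d for all t. Let P := Σ_{k=0}^∞ A^k E Σ_w Eᵀ (Aᵀ)^k. If r > 0 satisfies r² > ( ‖D‖·d/(1 − ‖A‖) + √((1/ε)·Tr(P)) )², then for every initial state x₀ there exists T > 0 such that for all t ≥ T and all input sequences with ‖v_τ‖ ≤ d: sup_{P ∈ M_t} CVaR_ε^P[ ‖A^t x₀ + G_t v̄_t + H_t w̄_t‖² − r² ] ≤ 0. -/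

import Mathlib

open MeasureTheory Matrix Kronecker

/-- Spectral norm (largest singular value) of a real matrix, as the operator norm of the
induced map between Euclidean spaces. -/
noncomputable def specNorm {m n : Type*} [Fintype m] [Fintype n] [DecidableEq n]
    (A : Matrix m n ℝ) : ℝ :=
  ‖LinearMap.toContinuousLinearMap (Matrix.toEuclideanLin A)‖

/-- Conditional value-at-risk at level `ε` of the loss `L` under the measure `P`:
`CVaR_ε^P[L] = inf_β ( β + (1/ε) E_P[max (L ξ - β) 0] )`. -/
noncomputable def CVaR {ι : Type*} [Fintype ι] (ε : ℝ)
    (P : Measure (EuclideanSpace ℝ ι)) (L : EuclideanSpace ℝ ι → ℝ) : ℝ :=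
  ⨅ β : ℝ, (β + ε⁻¹ * ∫ ξ, max (L ξ - β) 0 ∂P)

/-- The set `M(S)` of Borel probability measures with zero mean and covariance `S`. -/
def MomentSet {ι : Type*} [Fintype ι] (S : Matrix ι ι ℝ) :
    Set (Measure (EuclideanSpace ℝ ι)) :=
  {P | IsProbabilityMeasure P ∧
       (∀ i, Integrable (fun ξ => ξ i) P) ∧
       (∀ i, ∫ ξ, ξ i ∂P = 0) ∧
       (∀ i j, Integrable (fun ξ => ξ i * ξ j) P) ∧
       (∀ i j, ∫ ξ, ξ i * ξ j ∂P = S i j)}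

/-- Worst-case CVaR over the moment set `M(S)`. -/
noncomputable def wcCVaR {ι : Type*} [Fintype ι] (ε : ℝ) (S : Matrix ι ι ℝ)
    (L : EuclideanSpace ℝ ι → ℝ) : ℝ :=
  ⨆ P : MomentSet S, CVaR ε (P : Measure (EuclideanSpace ℝ ι)) L

/-- The block matrix `H_t = [A^(t-1) E, A^(t-2) E, ..., E]`, viewed as a matrix acting on the
stacked disturbance vector `w̄_t = (w_0, ..., w_(t-1))` (indexed by `Fin t × Fin nw`),
so that `H_t w̄_t = Σ_k A^(t-1-k) E w_k`. -/
noncomputable def Hmat {nx nw : ℕ} (A : Matrix (Fin nx) (Fin nx) ℝ)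
    (E : Matrix (Fin nx) (Fin nw) ℝ) (t : ℕ) :
    Matrix (Fin nx) (Fin t × Fin nw) ℝ :=
  Matrix.of fun i p => (A ^ (t - 1 - (p.1 : ℕ)) * E) i p.2

/-! ### Auxiliary lemmas about the spectral norm -/

section SpecNorm
open scoped Matrix.Norms.L2Operator

variable {m n l : Type*} [Fintype m] [Fintype n] [Fintype l] [DecidableEq n] [DecidableEq l]

lemma specNorm_eq_norm (A : Matrix m n ℝ) : specNorm A = ‖A‖ := rfl

lemma specNorm_nonneg (A : Matrix m n ℝ) : 0 ≤ specNorm A := by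
  rw [specNorm_eq_norm]; exact norm_nonneg _

lemma specNorm_mul_le (A : Matrix m n ℝ) (B : Matrix n l ℝ) :
    specNorm (A * B) ≤ specNorm A * specNorm B := by
  simpa only [specNorm_eq_norm] using Matrix.l2_opNorm_mul A B

lemma specNorm_one_le [DecidableEq m] : specNorm (1 : Matrix m m ℝ) ≤ 1 := by
  rw [specNorm_eq_norm, Matrix.cstar_norm_def, _root_.map_one]
  exact ContinuousLinearMap.norm_id_le

lemma specNorm_pow_le [DecidableEq m] (A : Matrix m m ℝ) (k : ℕ) :
    specNorm (A ^ k) ≤ specNorm A ^ k := by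
  induction k with
  | zero => simpa using specNorm_one_le
  | succ k ih =>
      calc specNorm (A ^ (k+1)) = specNorm (A ^ k * A) := by rw [pow_succ]
      _ ≤ specNorm (A ^ k) * specNorm A := specNorm_mul_le _ _
      _ ≤ specNorm A ^ k * specNorm A :=
          mul_le_mul_of_nonneg_right ih (specNorm_nonneg A)
      _ = specNorm A ^ (k+1) := by rw [pow_succ]

lemma norm_toEuclideanLin_apply_le (A : Matrix m n ℝ) (x : EuclideanSpace ℝ n) :
    ‖Matrix.toEuclideanLin A x‖ ≤ specNorm A * ‖x‖ :=
  (LinearMap.toContinuousLinearMap (Matrix.toEuclideanLin A)).le_opNorm x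

lemma euclidean_abs_apply_le {ι : Type*} [Fintype ι] (u : EuclideanSpace ℝ ι) (i : ι) :
    |u i| ≤ ‖u‖ := by
  rw [EuclideanSpace.norm_eq, ← Real.sqrt_sq_eq_abs]
  apply Real.sqrt_le_sqrt
  have : |u i| ^ 2 ≤ ∑ j, ‖u j‖ ^ 2 := by
    refine Finset.single_le_sum (f := fun j => ‖u j‖ ^ 2) (fun j _ => by positivity)
      (Finset.mem_univ i) |>.trans_eq' ?_
    rw [Real.norm_eq_abs]
  simpa [sq_abs] using this

lemma abs_entry_le_specNorm (A : Matrix m n ℝ) (i : m) (j : n) :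
    |A i j| ≤ specNorm A := by
  have hu : (Matrix.toEuclideanLin A (EuclideanSpace.single j (1:ℝ))) i = A i j := by
    simp only [Matrix.toEuclideanLin_apply]
    rw [show (EuclideanSpace.single j (1:ℝ)).ofLp = Pi.single j 1 from rfl]
    simp [Matrix.mulVec_single]
  have h1 := euclidean_abs_apply_le (Matrix.toEuclideanLin A (EuclideanSpace.single j (1:ℝ))) i
  have h2 := norm_toEuclideanLin_apply_le A (EuclideanSpace.single j (1:ℝ))
  rw [EuclideanSpace.norm_single] at h2
  rw [hu] at h1
  simpa using h1.trans h2

end SpecNorm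

/-! ### Auxiliary lemmas about the matrices `A^k (E Sw Eᵀ) (Aᵀ)^k` -/

section Phi
variable {nx nw : ℕ}

lemma trace_MSwMT (Sw : Matrix (Fin nw) (Fin nw) ℝ) (M : Matrix (Fin nx) (Fin nw) ℝ) :
    Matrix.trace (M * Sw * Mᵀ) = ∑ a, ∑ i, ∑ j, M a i * M a j * Sw i j := by
  simp only [Matrix.trace, Matrix.diag, Matrix.mul_apply, Matrix.transpose_apply,
    Finset.sum_mul]
  refine Finset.sum_congr rfl fun a _ => ?_
  rw [Finset.sum_comm]
  exact Finset.sum_congr rfl fun i _ => Finset.sum_congr rfl fun j _ => by ring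

lemma trace_MSwMT_nonneg {Sw : Matrix (Fin nw) (Fin nw) ℝ} (hSw : Sw.PosSemidef)
    (M : Matrix (Fin nx) (Fin nw) ℝ) : 0 ≤ Matrix.trace (M * Sw * Mᵀ) := by
  rw [trace_MSwMT]
  refine Finset.sum_nonneg fun a _ => ?_
  have h := hSw.dotProduct_mulVec_nonneg (fun i => M a i)
  simp only [star_trivial, dotProduct, Matrix.mulVec] at h
  calc (0:ℝ) ≤ ∑ i, (fun i => M a i) i * ∑ j, Sw i j * M a j := h
  _ = ∑ i, ∑ j, M a i * M a j * Sw i j := by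
      refine Finset.sum_congr rfl fun i _ => ?_
      rw [Finset.mul_sum]
      exact Finset.sum_congr rfl fun j _ => by ring

lemma phi_eq (A : Matrix (Fin nx) (Fin nx) ℝ) (E : Matrix (Fin nx) (Fin nw) ℝ)
    (Sw : Matrix (Fin nw) (Fin nw) ℝ) (k : ℕ) :
    A ^ k * (E * Sw * Eᵀ) * (Aᵀ) ^ k = (A ^ k * E) * Sw * (A ^ k * E)ᵀ := by
  rw [Matrix.transpose_mul, Matrix.transpose_pow]
  simp only [Matrix.mul_assoc]

lemma Qsum_eq (A : Matrix (Fin nx) (Fin nx) ℝ) (E : Matrix (Fin nx) (Fin nw) ℝ)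
    (Sw : Matrix (Fin nw) (Fin nw) ℝ) (t : ℕ) :
    ∑ a : Fin nx, ∑ p : Fin t × Fin nw, ∑ q : Fin t × Fin nw,
      Hmat A E t a p * Hmat A E t a q * ((1 : Matrix (Fin t) (Fin t) ℝ) ⊗ₖ Sw) p q
    = ∑ k ∈ Finset.range t, Matrix.trace (A ^ k * (E * Sw * Eᵀ) * (Aᵀ) ^ k) := by
  set f : ℕ → ℝ := fun k => ∑ a, ∑ i, ∑ j, (A ^ k * E) a i * (A ^ k * E) a j * Sw i j with hf
  have key : ∀ k : ℕ, Matrix.trace (A ^ k * (E * Sw * Eᵀ) * (Aᵀ) ^ k) = f k := fun k => by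
    rw [phi_eq, trace_MSwMT]
  calc ∑ a : Fin nx, ∑ p : Fin t × Fin nw, ∑ q : Fin t × Fin nw,
      Hmat A E t a p * Hmat A E t a q * ((1 : Matrix (Fin t) (Fin t) ℝ) ⊗ₖ Sw) p q
      = ∑ a : Fin nx, ∑ k : Fin t, ∑ i, ∑ j,
          (A ^ (t-1-(k:ℕ)) * E) a i * (A ^ (t-1-(k:ℕ)) * E) a j * Sw i j := by
        refine Finset.sum_congr rfl fun a _ => ?_
        rw [Fintype.sum_prod_type]
        refine Finset.sum_congr rfl fun k _ => ?_
        refine Finset.sum_congr rfl fun i _ => ?_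
        rw [Fintype.sum_prod_type, Finset.sum_comm]
        refine Finset.sum_congr rfl fun j _ => ?_
        rw [Finset.sum_eq_single k]
        · simp [Hmat, Matrix.kronecker_apply, Matrix.one_apply_eq]
        · intro l _ hl
          simp [Matrix.kronecker_apply, Matrix.one_apply_ne (Ne.symm hl)]
        · intro h; exact absurd (Finset.mem_univ k) h
    _ = ∑ k : Fin t, ∑ a : Fin nx, ∑ i, ∑ j,
          (A ^ (t-1-(k:ℕ)) * E) a i * (A ^ (t-1-(k:ℕ)) * E) a j * Sw i j :=
        Finset.sum_comm
    _ = ∑ k ∈ Finset.range t, f (t - 1 - k) :=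
        Fin.sum_univ_eq_sum_range (fun k => f (t - 1 - k)) t
    _ = ∑ k ∈ Finset.range t, f k := Finset.sum_range_reflect f t
    _ = _ := Finset.sum_congr rfl fun k _ => (key k).symm

variable (A : Matrix (Fin nx) (Fin nx) ℝ) (E : Matrix (Fin nx) (Fin nw) ℝ)
  (Sw : Matrix (Fin nw) (Fin nw) ℝ)

lemma phi_entry_abs_le (hA0 : 0 ≤ specNorm A) (k : ℕ) (a b : Fin nx) :
    |(A ^ k * (E * Sw * Eᵀ) * (Aᵀ) ^ k) a b| ≤
      ((nw : ℝ) ^ 2 * specNorm Sw * specNorm E ^ 2) * (specNorm A ^ 2) ^ k := by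
  rw [phi_eq]
  set M := A ^ k * E with hM
  have hMb : ∀ (a : Fin nx) (i : Fin nw), |M a i| ≤ specNorm A ^ k * specNorm E := by
    intro a i
    refine (abs_entry_le_specNorm M a i).trans ?_
    exact (specNorm_mul_le _ _).trans
      (mul_le_mul_of_nonneg_right (specNorm_pow_le A k) (specNorm_nonneg E))
  have expand : (M * Sw * Mᵀ) a b = ∑ j, ∑ i, M a i * Sw i j * M b j := by
    simp [Matrix.mul_apply, Matrix.transpose_apply, Finset.sum_mul]
  rw [expand]
  have habs : |∑ j, ∑ i, M a i * Sw i j * M b j| ≤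
      ∑ j : Fin nw, ∑ i : Fin nw, |M a i| * |Sw i j| * |M b j| := by
    refine (Finset.abs_sum_le_sum_abs _ _).trans (Finset.sum_le_sum fun j _ => ?_)
    refine (Finset.abs_sum_le_sum_abs _ _).trans (Finset.sum_le_sum fun i _ => ?_)
    rw [abs_mul, abs_mul]
  refine habs.trans ?_
  have hterm : ∀ (i j : Fin nw), |M a i| * |Sw i j| * |M b j| ≤
      (specNorm A ^ k * specNorm E) * specNorm Sw * (specNorm A ^ k * specNorm E) := by
    intro i j
    have h1 := hMb a i; have h2 := hMb b j
    have h3 := abs_entry_le_specNorm Sw i j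
    have hkE : (0:ℝ) ≤ specNorm A ^ k * specNorm E :=
      mul_nonneg (pow_nonneg hA0 k) (specNorm_nonneg E)
    have hS0 : (0:ℝ) ≤ specNorm Sw := specNorm_nonneg Sw
    exact mul_le_mul (mul_le_mul h1 h3 (abs_nonneg _) hkE) h2 (abs_nonneg _)
      (mul_nonneg hkE hS0)
  calc ∑ j : Fin nw, ∑ i : Fin nw, |M a i| * |Sw i j| * |M b j|
      ≤ ∑ _j : Fin nw, ∑ _i : Fin nw,
          (specNorm A ^ k * specNorm E) * specNorm Sw * (specNorm A ^ k * specNorm E) :=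
        Finset.sum_le_sum fun j _ => Finset.sum_le_sum fun i _ => hterm i j
    _ = ((nw:ℝ) ^ 2 * specNorm Sw * specNorm E ^ 2) * (specNorm A ^ 2) ^ k := by
        simp [Finset.sum_const, Finset.card_univ]
        ring

lemma phi_summable (hA0 : 0 ≤ specNorm A) (hA : specNorm A < 1) :
    Summable (fun k : ℕ => A ^ k * (E * Sw * Eᵀ) * (Aᵀ) ^ k) := by
  have hgeom : Summable (fun k : ℕ =>
      ((nw : ℝ) ^ 2 * specNorm Sw * specNorm E ^ 2) * (specNorm A ^ 2) ^ k) := by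
    refine Summable.mul_left _ (summable_geometric_of_lt_one (by positivity) ?_)
    nlinarith
  refine Pi.summable.2 fun a => Pi.summable.2 fun b => ?_
  refine Summable.of_abs ?_
  exact Summable.of_nonneg_of_le (fun k => abs_nonneg _)
    (fun k => phi_entry_abs_le A E Sw hA0 k a b) hgeom

lemma trace_hasSum (h : Summable (fun k : ℕ => A ^ k * (E * Sw * Eᵀ) * (Aᵀ) ^ k)) :
    HasSum (fun k : ℕ => Matrix.trace (A ^ k * (E * Sw * Eᵀ) * (Aᵀ) ^ k))
      (Matrix.trace (∑' k : ℕ, A ^ k * (E * Sw * Eᵀ) * (Aᵀ) ^ k)) := by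
  have := h.hasSum.map (Matrix.traceAddMonoidHom (Fin nx) ℝ)
    (Continuous.matrix_trace continuous_id)
  exact this

end Phi

/-! ### Auxiliary lemmas about second-moment integrals -/

section MomentInt
variable {ι κ : Type*} [Fintype ι] [Fintype κ] [DecidableEq ι]

lemma norm_sq_repr (H : Matrix κ ι ℝ) (w : EuclideanSpace ℝ ι) :
    ‖Matrix.toEuclideanLin H w‖ ^ 2 =
      ∑ a : κ, ∑ p : ι, ∑ q : ι, (H a p * H a q) * (w p * w q) := by
  have happ : ∀ a : κ, (Matrix.toEuclideanLin H w) a = ∑ p, H a p * w p := fun a => rfl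
  rw [EuclideanSpace.norm_eq, Real.sq_sqrt (by positivity)]
  refine Finset.sum_congr rfl fun a _ => ?_
  rw [Real.norm_eq_abs, sq_abs, happ, sq, Finset.sum_mul_sum]
  exact Finset.sum_congr rfl fun p _ => Finset.sum_congr rfl fun q _ => by ring

lemma moment_integrable {S : Matrix ι ι ℝ} {P : Measure (EuclideanSpace ℝ ι)}
    (hP : P ∈ MomentSet S) (H : Matrix κ ι ℝ) :
    Integrable (fun w => ‖Matrix.toEuclideanLin H w‖ ^ 2) P := by
  have : (fun w : EuclideanSpace ℝ ι => ‖Matrix.toEuclideanLin H w‖ ^ 2) =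
      fun w => ∑ a : κ, ∑ p : ι, ∑ q : ι, (H a p * H a q) * (w p * w q) :=
    funext fun w => norm_sq_repr H w
  rw [this]
  refine integrable_finset_sum _ fun a _ => integrable_finset_sum _ fun p _ =>
    integrable_finset_sum _ fun q _ => ?_
  exact (hP.2.2.2.1 p q).const_mul _

lemma moment_integral {S : Matrix ι ι ℝ} {P : Measure (EuclideanSpace ℝ ι)}
    (hP : P ∈ MomentSet S) (H : Matrix κ ι ℝ) :
    ∫ w, ‖Matrix.toEuclideanLin H w‖ ^ 2 ∂P =
      ∑ a : κ, ∑ p : ι, ∑ q : ι, H a p * H a q * S p q := by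
  have : (fun w : EuclideanSpace ℝ ι => ‖Matrix.toEuclideanLin H w‖ ^ 2) =
      fun w => ∑ a : κ, ∑ p : ι, ∑ q : ι, (H a p * H a q) * (w p * w q) :=
    funext fun w => norm_sq_repr H w
  rw [this]
  rw [integral_finset_sum _ (fun a _ => integrable_finset_sum _ fun p _ =>
    integrable_finset_sum _ fun q _ => (hP.2.2.2.1 p q).const_mul _)]
  refine Finset.sum_congr rfl fun a _ => ?_
  rw [integral_finset_sum _ (fun p _ => integrable_finset_sum _ fun q _ =>
    (hP.2.2.2.1 p q).const_mul _)]
  refine Finset.sum_congr rfl fun p _ => ?_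
  rw [integral_finset_sum _ (fun q _ => (hP.2.2.2.1 p q).const_mul _)]
  refine Finset.sum_congr rfl fun q _ => ?_
  rw [MeasureTheory.integral_const_mul, hP.2.2.2.2 p q]

end MomentInt

/-- Theorem 3: worst-case CVaR ultimate bound with bounded input for
`x_{t+1} = A x_t + D v_t + E w_t`. -/
theorem stmt14 {nx nv nw : ℕ} (ε : ℝ) (hε : ε ∈ Set.Ioo (0 : ℝ) 1)
    (A : Matrix (Fin nx) (Fin nx) ℝ) (D : Matrix (Fin nx) (Fin nv) ℝ)
    (E : Matrix (Fin nx) (Fin nw) ℝ) (Sw : Matrix (Fin nw) (Fin nw) ℝ)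
    (hA : specNorm A < 1) (hSw : Sw.PosSemidef)
    (d : ℝ) (r : ℝ) (hr : 0 < r)
    (hr2 : (specNorm D * d / (1 - specNorm A) +
      Real.sqrt (ε⁻¹ *
        Matrix.trace (∑' k : ℕ, A ^ k * (E * Sw * Eᵀ) * (Aᵀ) ^ k))) ^ 2 < r ^ 2) :
    ∀ x₀ : EuclideanSpace ℝ (Fin nx), ∃ T : ℕ, 0 < T ∧ ∀ t ≥ T,
      ∀ v : ℕ → EuclideanSpace ℝ (Fin nv), (∀ τ, ‖v τ‖ ≤ d) →
      wcCVaR ε ((1 : Matrix (Fin t) (Fin t) ℝ) ⊗ₖ Sw)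
        (fun w => ‖Matrix.toEuclideanLin (A ^ t) x₀ +
          (∑ k ∈ Finset.range t, Matrix.toEuclideanLin (A ^ k * D) (v (t - 1 - k))) +
          Matrix.toEuclideanLin (Hmat A E t) w‖ ^ 2 - r ^ 2) ≤ 0 := by
  intro x₀
  obtain ⟨hε0, hε1⟩ := hε
  have hρ0 : 0 ≤ specNorm A := specNorm_nonneg A
  have hρ1 : specNorm A < 1 := hA
  have hεinv0 : 0 ≤ ε⁻¹ := by positivity
  have hsumφ : Summable (fun k : ℕ => A ^ k * (E * Sw * Eᵀ) * (Aᵀ) ^ k) :=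
    phi_summable A E Sw hρ0 hρ1
  obtain ⟨TrP, hTrPdef⟩ : ∃ x : ℝ,
      x = Matrix.trace (∑' k : ℕ, A ^ k * (E * Sw * Eᵀ) * (Aᵀ) ^ k) := ⟨_, rfl⟩
  rw [← hTrPdef] at hr2
  have htr : HasSum (fun k : ℕ => Matrix.trace (A ^ k * (E * Sw * Eᵀ) * (Aᵀ) ^ k)) TrP := by
    rw [hTrPdef]; exact trace_hasSum A E Sw hsumφ
  have htrnonneg : ∀ k : ℕ, 0 ≤ Matrix.trace (A ^ k * (E * Sw * Eᵀ) * (Aᵀ) ^ k) := by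
    intro k; rw [phi_eq]; exact trace_MSwMT_nonneg hSw _
  obtain ⟨K, hKdef⟩ : ∃ x : ℝ,
      x = specNorm D * d / (1 - specNorm A) + Real.sqrt (ε⁻¹ * TrP) := ⟨_, rfl⟩
  rw [← hKdef] at hr2
  have hKr : K < r := by
    by_contra hcon
    push_neg at hcon
    have := pow_le_pow_left₀ hr.le hcon 2
    linarith [hr2]
  have htend : Filter.Tendsto (fun t : ℕ => specNorm A ^ t * ‖x₀‖)
      Filter.atTop (nhds 0) := by
    have := tendsto_pow_atTop_nhds_zero_of_lt_one hρ0 hρ1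
    simpa using this.mul_const ‖x₀‖
  have hev : ∀ᶠ t in Filter.atTop, specNorm A ^ t * ‖x₀‖ < r - K :=
    htend.eventually_lt_const (by linarith)
  obtain ⟨N, hN⟩ := Filter.eventually_atTop.1 hev
  refine ⟨N + 1, Nat.succ_pos N, fun t ht v hv => ?_⟩
  have hd0 : 0 ≤ d := (norm_nonneg (v 0)).trans (hv 0)
  set H := Hmat A E t with hHdef
  set cvec : EuclideanSpace ℝ (Fin nx) := Matrix.toEuclideanLin (A ^ t) x₀ +
      ∑ k ∈ Finset.range t, Matrix.toEuclideanLin (A ^ k * D) (v (t - 1 - k)) with hcvec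
  obtain ⟨c, hc⟩ : ∃ x : ℝ, x = ‖cvec‖ := ⟨_, rfl⟩
  have hc0 : 0 ≤ c := by rw [hc]; exact norm_nonneg _
  obtain ⟨Q, hQdef⟩ : ∃ x : ℝ,
      x = ∑ a : Fin nx, ∑ p : Fin t × Fin nw, ∑ q : Fin t × Fin nw,
        H a p * H a q * ((1 : Matrix (Fin t) (Fin t) ℝ) ⊗ₖ Sw) p q := ⟨_, rfl⟩
  have hQeq : Q = ∑ k ∈ Finset.range t,
      Matrix.trace (A ^ k * (E * Sw * Eᵀ) * (Aᵀ) ^ k) := hQdef.trans (Qsum_eq A E Sw t)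
  have hQ0 : 0 ≤ Q := hQeq ▸ Finset.sum_nonneg (fun k _ => htrnonneg k)
  have hQle : Q ≤ TrP := by
    rw [hQeq]
    exact (Summable.sum_le_tsum (Finset.range t) (fun k _ => htrnonneg k) htr.summable).trans
      htr.tsum_eq.le
  obtain ⟨s, hs⟩ : ∃ x : ℝ, x = Real.sqrt (ε⁻¹ * Q) := ⟨_, rfl⟩
  have hs0 : 0 ≤ s := by rw [hs]; exact Real.sqrt_nonneg _
  have hs2 : s ^ 2 = ε⁻¹ * Q := by
    rw [hs]; exact Real.sq_sqrt (by positivity)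
  have hsle : s ≤ Real.sqrt (ε⁻¹ * TrP) := by
    rw [hs]; exact Real.sqrt_le_sqrt (mul_le_mul_of_nonneg_left hQle hεinv0)
  -- bound on the deterministic part
  have hcb : c ≤ specNorm A ^ t * ‖x₀‖ + specNorm D * d / (1 - specNorm A) := by
    rw [hc, hcvec]
    refine (norm_add_le _ _).trans ?_
    have hb1 : ‖Matrix.toEuclideanLin (A ^ t) x₀‖ ≤ specNorm A ^ t * ‖x₀‖ :=
      (norm_toEuclideanLin_apply_le _ _).trans
        (mul_le_mul_of_nonneg_right (specNorm_pow_le A t) (norm_nonneg _))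
    have hb2 : ‖∑ k ∈ Finset.range t, Matrix.toEuclideanLin (A ^ k * D) (v (t - 1 - k))‖ ≤
        specNorm D * d / (1 - specNorm A) := by
      refine (norm_sum_le _ _).trans ?_
      have hterm : ∀ k, ‖Matrix.toEuclideanLin (A ^ k * D) (v (t - 1 - k))‖ ≤
          specNorm A ^ k * (specNorm D * d) := by
        intro k
        refine (norm_toEuclideanLin_apply_le _ _).trans ?_
        have h1 : specNorm (A ^ k * D) ≤ specNorm A ^ k * specNorm D :=
          (specNorm_mul_le _ _).trans
            (mul_le_mul_of_nonneg_right (specNorm_pow_le A k) (specNorm_nonneg D))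
        calc specNorm (A ^ k * D) * ‖v (t - 1 - k)‖
            ≤ (specNorm A ^ k * specNorm D) * d :=
              mul_le_mul h1 (hv _) (norm_nonneg _)
                (mul_nonneg (pow_nonneg hρ0 k) (specNorm_nonneg D))
          _ = specNorm A ^ k * (specNorm D * d) := by ring
      refine (Finset.sum_le_sum fun k _ => hterm k).trans ?_
      rw [← Finset.sum_mul]
      have hDd : 0 ≤ specNorm D * d := mul_nonneg (specNorm_nonneg D) hd0
      have hgeo : ∑ k ∈ Finset.range t, specNorm A ^ k ≤ (1 - specNorm A)⁻¹ :=
        (Summable.sum_le_tsum (Finset.range t) (fun k _ => pow_nonneg hρ0 k)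
          (summable_geometric_of_lt_one hρ0 hρ1)).trans_eq
          (tsum_geometric_of_lt_one hρ0 hρ1)
      calc (∑ k ∈ Finset.range t, specNorm A ^ k) * (specNorm D * d)
          ≤ (1 - specNorm A)⁻¹ * (specNorm D * d) :=
            mul_le_mul_of_nonneg_right hgeo hDd
        _ = specNorm D * d / (1 - specNorm A) := by rw [div_eq_mul_inv]; ring
    linarith [hb1, hb2]
  have hcs : c + s < r := by
    have h1 := hN t (Nat.le_of_succ_le ht)
    have h2 : Real.sqrt (ε⁻¹ * TrP) = K - specNorm D * d / (1 - specNorm A) := by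
      rw [hKdef]; ring
    linarith [hcb, hsle]
  -- now bound the worst-case CVaR
  refine Real.iSup_nonpos ?_
  rintro ⟨P, hP⟩
  obtain ⟨δ, hδdef⟩ : ∃ x : ℝ, x = (r - c - s) / 2 := ⟨_, rfl⟩
  have hδ0 : 0 < δ := by rw [hδdef]; linarith
  obtain ⟨lam, hlamdef⟩ : ∃ x : ℝ, x = (s + δ) / (c + δ) := ⟨_, rfl⟩
  have hcδ : 0 < c + δ := by linarith
  have hsδ : 0 < s + δ := by linarith
  have hlam0 : 0 < lam := by rw [hlamdef]; exact div_pos hsδ hcδ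
  obtain ⟨μ, hμdef⟩ : ∃ x : ℝ, x = lam⁻¹ := ⟨_, rfl⟩
  have hμ0 : 0 < μ := by rw [hμdef]; exact inv_pos.2 hlam0
  have hlamμ : lam * μ = 1 := by rw [hμdef]; exact mul_inv_cancel₀ (ne_of_gt hlam0)
  have hlamc : lam * (c + δ) = s + δ := by
    rw [hlamdef]; exact div_mul_cancel₀ _ (ne_of_gt hcδ)
  have hμs : μ * (s + δ) = c + δ := by
    have hμeq : μ = (c + δ) / (s + δ) := by rw [hμdef, hlamdef, inv_div]
    rw [hμeq]
    exact div_mul_cancel₀ _ (ne_of_gt hsδ)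
  obtain ⟨β, hβdef⟩ : ∃ x : ℝ, x = (1 + lam) * c ^ 2 - r ^ 2 := ⟨_, rfl⟩
  -- the scalar inequality
  have h1s : lam * c ^ 2 ≤ (s + δ) * c := by
    have e : lam * c ^ 2 = (s + δ) * c - lam * δ * c := by
      rw [← hlamc]; ring
    rw [e]
    have : 0 ≤ lam * δ * c := mul_nonneg (mul_nonneg hlam0.le hδ0.le) hc0
    linarith
  have h2s : μ * s ^ 2 ≤ (c + δ) * s := by
    have e : μ * s ^ 2 = (c + δ) * s - μ * δ * s := by
      rw [← hμs]; ring
    rw [e]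
    have : 0 ≤ μ * δ * s := mul_nonneg (mul_nonneg hμ0.le hδ0.le) hs0
    linarith
  have hfin : 0 ≤ (r - (c + s)) * (2 * r + (c + s)) :=
    mul_nonneg (by linarith) (by linarith)
  have hscalar : (1 + lam) * c ^ 2 + (1 + μ) * s ^ 2 ≤ r ^ 2 := by
    have e1 : (1 + lam) * c ^ 2 + (1 + μ) * s ^ 2 ≤
        c ^ 2 + s ^ 2 + (s + δ) * c + (c + δ) * s := by linarith [h1s, h2s]
    have hδc : δ * c = (r - c - s) / 2 * c := by rw [hδdef]
    have hδs : δ * s = (r - c - s) / 2 * s := by rw [hδdef]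
    have e2 : c ^ 2 + s ^ 2 + (s + δ) * c + (c + δ) * s ≤ r ^ 2 := by
      linarith [hfin, hδc, hδs]
    linarith [e1, e2]
  -- pointwise bound on the loss
  have hLpt : ∀ w : EuclideanSpace ℝ (Fin t × Fin nw),
      max ((‖cvec + Matrix.toEuclideanLin H w‖ ^ 2 - r ^ 2) - β) 0 ≤
        (1 + μ) * ‖Matrix.toEuclideanLin H w‖ ^ 2 := by
    intro w
    obtain ⟨nn, hnn⟩ : ∃ x : ℝ, x = ‖Matrix.toEuclideanLin H w‖ := ⟨_, rfl⟩
    have hnn0 : 0 ≤ nn := by rw [hnn]; exact norm_nonneg _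
    have hn : ‖cvec + Matrix.toEuclideanLin H w‖ ≤ c + nn := by
      rw [hc, hnn]; exact norm_add_le _ _
    have hsq : ‖cvec + Matrix.toEuclideanLin H w‖ ^ 2 ≤ (c + nn) ^ 2 :=
      pow_le_pow_left₀ (norm_nonneg _) hn 2
    have hmuexp : μ * (lam * c - nn) ^ 2 = lam * c ^ 2 - 2 * (c * nn) + μ * nn ^ 2 := by
      calc μ * (lam * c - nn) ^ 2
          = (lam * μ) * (lam * c ^ 2) - 2 * ((lam * μ) * (c * nn)) + μ * nn ^ 2 := by ring
        _ = lam * c ^ 2 - 2 * (c * nn) + μ * nn ^ 2 := by rw [hlamμ]; ring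
    have hcross : 2 * (c * nn) ≤ lam * c ^ 2 + μ * nn ^ 2 := by
      have h0 : 0 ≤ μ * (lam * c - nn) ^ 2 := mul_nonneg hμ0.le (sq_nonneg _)
      rw [hmuexp] at h0
      linarith
    have hkey : (c + nn) ^ 2 ≤ (1 + lam) * c ^ 2 + (1 + μ) * nn ^ 2 := by
      linarith [hcross]
    have hfinal : (‖cvec + Matrix.toEuclideanLin H w‖ ^ 2 - r ^ 2) - β ≤
        (1 + μ) * nn ^ 2 := by
      rw [hβdef]
      linarith
    have hrhs : (1 + μ) * ‖Matrix.toEuclideanLin H w‖ ^ 2 = (1 + μ) * nn ^ 2 := by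
      rw [hnn]
    rw [hrhs]
    exact max_le hfinal (by positivity)
  -- integrability facts
  have hGint : Integrable (fun w => ‖Matrix.toEuclideanLin H w‖ ^ 2) P :=
    moment_integrable hP H
  have hGval : ∫ w, ‖Matrix.toEuclideanLin H w‖ ^ 2 ∂P = Q :=
    (moment_integral hP H).trans hQdef.symm
  have hgint : Integrable (fun w => (1 + μ) * ‖Matrix.toEuclideanLin H w‖ ^ 2) P :=
    hGint.const_mul _
  have hcont : Continuous (fun w : EuclideanSpace ℝ (Fin t × Fin nw) =>
      max ((‖cvec + Matrix.toEuclideanLin H w‖ ^ 2 - r ^ 2) - β) 0) := by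
    have h1 : Continuous fun w : EuclideanSpace ℝ (Fin t × Fin nw) =>
        Matrix.toEuclideanLin H w := LinearMap.continuous_of_finiteDimensional _
    exact ((((continuous_const.add h1).norm.pow 2).sub continuous_const).sub
      continuous_const).max continuous_const
  have hfint : Integrable (fun w =>
      max ((‖cvec + Matrix.toEuclideanLin H w‖ ^ 2 - r ^ 2) - β) 0) P := by
    refine hgint.mono' hcont.aestronglyMeasurable ?_
    refine Filter.Eventually.of_forall fun w => ?_
    rw [Real.norm_eq_abs, abs_of_nonneg (le_max_right _ _)]
    exact hLpt w
  have hint_le : ∫ w, max ((‖cvec + Matrix.toEuclideanLin H w‖ ^ 2 - r ^ 2) - β) 0 ∂P ≤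
      (1 + μ) * Q := by
    calc ∫ w, max ((‖cvec + Matrix.toEuclideanLin H w‖ ^ 2 - r ^ 2) - β) 0 ∂P
        ≤ ∫ w, (1 + μ) * ‖Matrix.toEuclideanLin H w‖ ^ 2 ∂P :=
          integral_mono hfint hgint (fun w => hLpt w)
      _ = (1 + μ) * Q := by rw [MeasureTheory.integral_const_mul, hGval]
  have hval : β + ε⁻¹ * ∫ w, max ((‖cvec + Matrix.toEuclideanLin H w‖ ^ 2 - r ^ 2) - β) 0 ∂P
      ≤ 0 := by
    have hmul : ε⁻¹ * ∫ w, max ((‖cvec + Matrix.toEuclideanLin H w‖ ^ 2 - r ^ 2) - β) 0 ∂P ≤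
        ε⁻¹ * ((1 + μ) * Q) := mul_le_mul_of_nonneg_left hint_le hεinv0
    have hq : ε⁻¹ * ((1 + μ) * Q) = (1 + μ) * s ^ 2 := by rw [hs2]; ring
    linarith [hmul, hq, hscalar, hβdef]
  -- conclude via the infimum
  show (⨅ b : ℝ, (b + ε⁻¹ *
      ∫ ξ, max ((‖cvec + Matrix.toEuclideanLin H ξ‖ ^ 2 - r ^ 2) - b) 0 ∂P)) ≤ 0
  by_cases hb : BddBelow (Set.range fun b : ℝ => b + ε⁻¹ *
      ∫ ξ, max ((‖cvec + Matrix.toEuclideanLin H ξ‖ ^ 2 - r ^ 2) - b) 0 ∂P)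
  · exact le_trans (ciInf_le hb β) hval
  · rw [Real.iInf_of_not_bddBelow hb]
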